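/- Let n ≥ 1 be an integer. For x ∈ {0,1}^n with s = Σ_{k=1}^n x_k ones, define kt(x) = ∫_0^1 u^s·(1−u)^{n−s} / (π·√(u(1−u))) du. Then: (i) Σ_{x ∈ {0,1}^n} kt(x) = 1, i.e. kt is a probability distribution on {0,1}^n; and (ii) for every x ∈ {0,1}^n and every u ∈ [0,1], u^s·(1−u)^{n−s} ≤ 2·√n · kt(x), i.e. sup_x sup_u p_u(x)/kt(x) ≤ 2√n, where p_u(x) = u^s(1−u)^{n−s} is the Bernoulli likelihood. -/

import Mathlib

open MeasureTheory Real Filter Nat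

/-- Number of ones in a binary word `x ∈ {0,1}^n`. -/
def ones {n : ℕ} (x : Fin n → Bool) : ℕ :=
  (Finset.univ.filter (fun k => x k = true)).card

/-- The Krichevsky–Trofimov mixture: the Bernoulli likelihood `u^s (1−u)^{n−s}`
integrated against the Beta(1/2,1/2) prior `1/(π√(u(1−u)))` on `(0,1)`. -/
noncomputable def kt {n : ℕ} (x : Fin n → Bool) : ℝ :=
  ∫ u in (0 : ℝ)..1,
    u ^ ones x * (1 - u) ^ (n - ones x) / (Real.pi * Real.sqrt (u * (1 - u)))

lemma realBeta_coe (p q : ℝ) :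
    ((∫ x in (0:ℝ)..1, x ^ (p-1) * (1-x) ^ (q-1) : ℝ) : ℂ) = Complex.betaIntegral p q := by
  rw [← intervalIntegral.integral_ofReal, Complex.betaIntegral]
  refine intervalIntegral.integral_congr fun x hx => ?_
  rw [Set.uIcc_of_le (by norm_num : (0:ℝ) ≤ 1)] at hx
  push_cast
  rw [Complex.ofReal_cpow hx.1, Complex.ofReal_cpow (by linarith [hx.2] : (0:ℝ) ≤ 1 - x)]
  push_cast
  ring

lemma realBeta_eq {p q : ℝ} (hp : 0 < p) (hq : 0 < q) :
    (∫ x in (0:ℝ)..1, x ^ (p-1) * (1-x) ^ (q-1) : ℝ)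
      = Real.Gamma p * Real.Gamma q / Real.Gamma (p+q) := by
  have h := Complex.Gamma_mul_Gamma_eq_betaIntegral
    (s := (p:ℂ)) (t := (q:ℂ)) (by simpa using hp) (by simpa using hq)
  have hne : Complex.Gamma ((p:ℂ) + q) ≠ 0 := by
    rw [← Complex.ofReal_add, Complex.Gamma_ofReal]
    exact_mod_cast (Real.Gamma_pos_of_pos (by linarith : (0:ℝ) < p + q)).ne'
  apply Complex.ofReal_injective
  rw [realBeta_coe]
  have h2 : Complex.betaIntegral p q
      = Complex.Gamma p * Complex.Gamma q / Complex.Gamma ((p:ℂ)+q) := by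
    rw [eq_div_iff hne]
    rw [← Complex.ofReal_add] at h
    rw [h]; push_cast; ring
  rw [h2, ← Complex.ofReal_add, Complex.Gamma_ofReal, Complex.Gamma_ofReal, Complex.Gamma_ofReal,
    ← Complex.ofReal_mul, ← Complex.ofReal_div]

lemma realBeta_integrable {p q : ℝ} (hp : 0 < p) (hq : 0 < q) :
    IntervalIntegrable (fun x : ℝ => x ^ (p-1) * (1-x) ^ (q-1)) volume 0 1 := by
  have hc := Complex.betaIntegral_convergent (u := (p:ℂ)) (v := (q:ℂ))
    (by simpa using hp) (by simpa using hq)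
  rw [intervalIntegrable_iff] at hc ⊢
  refine (hc.re).congr ?_
  filter_upwards [ae_restrict_mem measurableSet_uIoc] with x hx
  rw [Set.uIoc_of_le (by norm_num : (0:ℝ) ≤ 1)] at hx
  have h0 : (0:ℝ) ≤ x := le_of_lt hx.1
  have h1 : (0:ℝ) ≤ 1 - x := by linarith [hx.2]
  have : ((x ^ (p-1) * (1-x) ^ (q-1) : ℝ) : ℂ)
      = (x:ℂ) ^ ((p:ℂ) - 1) * (1 - (x:ℂ)) ^ ((q:ℂ) - 1) := by
    push_cast
    rw [Complex.ofReal_cpow h0, Complex.ofReal_cpow h1]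
    push_cast; ring
  simp [← this]

lemma Gamma_half (m : ℕ) :
    Real.Gamma ((m:ℝ) + 1/2) = Real.sqrt π * (2*m)! / (4^m * m !) := by
  induction m with
  | zero => simpa using Real.Gamma_one_half_eq
  | succ m ih =>
    have h1 : ((m+1 : ℕ):ℝ) + 1/2 = ((m:ℝ) + 1/2) + 1 := by push_cast; ring
    rw [h1, Real.Gamma_add_one (by positivity : ((m:ℝ) + 1/2) ≠ 0), ih]
    have h2 : (2*(m+1)) = (2*m+1) + 1 := by ring
    rw [h2, Nat.factorial_succ, Nat.factorial_succ, Nat.factorial_succ]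
    have h4 : (0:ℝ) < 4 ^ m := by positivity
    have hf : (0:ℝ) < (m ! : ℝ) := by exact_mod_cast m.factorial_pos
    push_cast
    field_simp
    ring

lemma ae_ne_one : ∀ᵐ u : ℝ ∂volume, u ≠ (1:ℝ) := by
  rw [ae_iff]
  have : {u : ℝ | ¬ u ≠ 1} = {(1:ℝ)} := by ext u; simp
  rw [this]
  exact Real.volume_singleton

lemma integrand_eq (a b : ℕ) {u : ℝ} (h0 : 0 < u) (h1 : u < 1) :
    u^a*(1-u)^b/(π*Real.sqrt (u*(1-u)))
      = (1/π) * (u^(((a:ℝ)+1/2)-1) * (1-u)^(((b:ℝ)+1/2)-1)) := by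
  have h1' : (0:ℝ) < 1 - u := by linarith
  have e1 : ((a:ℝ)+1/2)-1 = (a:ℝ) - 1/2 := by ring
  have e2 : ((b:ℝ)+1/2)-1 = (b:ℝ) - 1/2 := by ring
  rw [e1, e2, Real.sqrt_mul h0.le, Real.sqrt_eq_rpow, Real.sqrt_eq_rpow,
    Real.rpow_sub h0, Real.rpow_sub h1', ← Real.rpow_natCast u a,
    ← Real.rpow_natCast (1-u) b]
  have n1 : u ^ ((1:ℝ)/2) ≠ 0 := (Real.rpow_pos_of_pos h0 _).ne'
  have n2 : (1-u) ^ ((1:ℝ)/2) ≠ 0 := (Real.rpow_pos_of_pos h1' _).ne'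
  have n3 : (π:ℝ) ≠ 0 := Real.pi_ne_zero
  field_simp

lemma kt_int (a b : ℕ) :
    IntervalIntegrable (fun u : ℝ => u^a*(1-u)^b/(π*Real.sqrt (u*(1-u)))) volume 0 1 := by
  have h := (realBeta_integrable (p := (a:ℝ)+1/2) (q := (b:ℝ)+1/2)
    (by positivity) (by positivity)).const_mul (1/π)
  refine h.congr_ae ?_
  filter_upwards [ae_restrict_mem measurableSet_uIoc, ae_restrict_of_ae ae_ne_one] with u hu hne
  rw [Set.uIoc_of_le (by norm_num : (0:ℝ) ≤ 1)] at hu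
  exact (integrand_eq a b hu.1 (lt_of_le_of_ne hu.2 hne)).symm

lemma ktab (a b : ℕ) :
    (∫ u in (0:ℝ)..1, u^a*(1-u)^b/(π*Real.sqrt (u*(1-u))))
      = ((2*a)! * (2*b)! : ℝ) / (4^(a+b) * a ! * b ! * (a+b)!) := by
  have hcongr : (∫ u in (0:ℝ)..1, u^a*(1-u)^b/(π*Real.sqrt (u*(1-u))))
      = ∫ u in (0:ℝ)..1, (1/π) * (u^(((a:ℝ)+1/2)-1) * (1-u)^(((b:ℝ)+1/2)-1)) := by
    refine intervalIntegral.integral_congr_ae ?_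
    filter_upwards [ae_ne_one] with u hne hu
    rw [Set.uIoc_of_le (by norm_num : (0:ℝ) ≤ 1)] at hu
    exact integrand_eq a b hu.1 (lt_of_le_of_ne hu.2 hne)
  rw [hcongr, intervalIntegral.integral_const_mul,
    realBeta_eq (by positivity) (by positivity)]
  have hpq : ((a:ℝ)+1/2) + ((b:ℝ)+1/2) = ((a+b : ℕ):ℝ) + 1 := by push_cast; ring
  rw [hpq, Real.Gamma_nat_eq_factorial, Gamma_half, Gamma_half]
  have h1 : (0:ℝ) < (a ! : ℝ) := by exact_mod_cast a.factorial_pos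
  have h2 : (0:ℝ) < (b ! : ℝ) := by exact_mod_cast b.factorial_pos
  have h3 : (0:ℝ) < ((a+b)! : ℝ) := by exact_mod_cast (a+b).factorial_pos
  have h4 : (0:ℝ) < π := Real.pi_pos
  have h5 : Real.sqrt π * Real.sqrt π = π := Real.mul_self_sqrt h4.le
  have h6 : (4:ℝ)^(a+b) = 4^a * 4^b := pow_add 4 a b
  push_cast
  rw [h6]
  set s := Real.sqrt π with hs
  have hsne : s ≠ 0 := (Real.sqrt_pos.mpr h4).ne'
  rw [← h5]
  field_simp

lemma stirling_ge {m : ℕ} (hm : 1 ≤ m) : Real.sqrt π ≤ Stirling.stirlingSeq m := by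
  obtain ⟨k, rfl⟩ := Nat.exists_eq_add_of_le hm
  have h := Stirling.stirlingSeq'_antitone
  have ht : Tendsto (fun k => Stirling.stirlingSeq (k + 1)) atTop (nhds (Real.sqrt π)) := by
    have := Stirling.tendsto_stirlingSeq_sqrt_pi
    exact this.comp (tendsto_add_atTop_nat 1)
  have := h.le_of_tendsto ht k
  simpa [Nat.add_comm] using this

lemma stirling_le {m : ℕ} (hm : 1 ≤ m) :
    Stirling.stirlingSeq m ≤ Real.exp 1 / Real.sqrt 2 := by
  obtain ⟨k, rfl⟩ := Nat.exists_eq_add_of_le hm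
  have h := Stirling.stirlingSeq'_antitone (Nat.zero_le k)
  simpa [Stirling.stirlingSeq_one, Nat.add_comm] using h

lemma stirling_two : Stirling.stirlingSeq 2 = Real.exp 1 ^ 2 / 4 := by
  rw [Stirling.stirlingSeq]
  norm_num [Nat.factorial]
  rw [show (4:ℝ) = 2^2 by norm_num]
  have he : Real.exp 2 = Real.exp 1 * Real.exp 1 := by rw [← Real.exp_add]; norm_num
  have : Real.exp 1 ≠ 0 := (Real.exp_pos 1).ne'
  rw [he]
  field_simp

lemma stirling_le2 {m : ℕ} (hm : 2 ≤ m) :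
    Stirling.stirlingSeq m ≤ Real.exp 1 ^ 2 / 4 := by
  obtain ⟨k, rfl⟩ := Nat.exists_eq_add_of_le hm
  have h := Stirling.stirlingSeq'_antitone (Nat.le_add_left 1 k)
  simp only [Function.comp, Nat.succ_eq_add_one] at h
  have e : 2 + k = k + 1 + 1 := by omega
  rw [e]
  calc Stirling.stirlingSeq (k + 1 + 1) ≤ Stirling.stirlingSeq (1 + 1) := h
    _ = Real.exp 1 ^ 2 / 4 := by norm_num [stirling_two]

lemma fact_eq {m : ℕ} (hm : 1 ≤ m) :
    (m ! : ℝ) = Stirling.stirlingSeq m * (Real.sqrt (2*m) * ((m:ℝ)/Real.exp 1)^m) := by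
  have hm' : (0:ℝ) < m := by exact_mod_cast hm
  rw [Stirling.stirlingSeq]
  have h1 : Real.sqrt (2*m) ≠ 0 := by positivity
  have h2 : ((m:ℝ)/Real.exp 1)^m ≠ 0 := by positivity
  field_simp

-- upper bound:  m! ≤ e √m (m/e)^m   for m ≥ 1
lemma fact_le {m : ℕ} (hm : 1 ≤ m) :
    (m ! : ℝ) ≤ Real.exp 1 * Real.sqrt m * ((m:ℝ)/Real.exp 1)^m := by
  have hm' : (0:ℝ) < m := by exact_mod_cast hm
  have h2 : Real.sqrt (2*(m:ℝ)) = Real.sqrt 2 * Real.sqrt m := Real.sqrt_mul (by norm_num) _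
  have hM : (0:ℝ) < ((m:ℝ)/Real.exp 1)^m := by positivity
  have hsm : (0:ℝ) ≤ Real.sqrt m := Real.sqrt_nonneg _
  have h2' : (0:ℝ) < Real.sqrt 2 := by positivity
  rw [fact_eq hm, h2]
  have := stirling_le hm
  calc Stirling.stirlingSeq m * (Real.sqrt 2 * Real.sqrt m * ((m:ℝ)/Real.exp 1)^m)
      ≤ (Real.exp 1 / Real.sqrt 2) * (Real.sqrt 2 * Real.sqrt m * ((m:ℝ)/Real.exp 1)^m) := by
        apply mul_le_mul_of_nonneg_right this (by positivity)
    _ = Real.exp 1 * Real.sqrt m * ((m:ℝ)/Real.exp 1)^m := by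
        field_simp
-- upper bound: m! ≤ (e²/4)√2 √m (m/e)^m  for m ≥ 2
lemma fact_le2 {m : ℕ} (hm : 2 ≤ m) :
    (m ! : ℝ) ≤ (Real.exp 1 ^ 2 / 4 * Real.sqrt 2) * Real.sqrt m * ((m:ℝ)/Real.exp 1)^m := by
  have h2 : Real.sqrt (2*(m:ℝ)) = Real.sqrt 2 * Real.sqrt m := Real.sqrt_mul (by norm_num) _
  rw [fact_eq (le_trans (by norm_num) hm), h2]
  have := stirling_le2 hm
  calc Stirling.stirlingSeq m * (Real.sqrt 2 * Real.sqrt m * ((m:ℝ)/Real.exp 1)^m)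
      ≤ (Real.exp 1 ^ 2 / 4) * (Real.sqrt 2 * Real.sqrt m * ((m:ℝ)/Real.exp 1)^m) := by
        apply mul_le_mul_of_nonneg_right this (by positivity)
    _ = (Real.exp 1 ^ 2 / 4 * Real.sqrt 2) * Real.sqrt m * ((m:ℝ)/Real.exp 1)^m := by ring
-- lower bound for (2m)! :  √π · 2√m · 4^m · ((m/e)^m)² ≤ (2m)!
lemma fact2_ge {m : ℕ} (hm : 1 ≤ m) :
    Real.sqrt π * (2 * Real.sqrt m) * 4^m * (((m:ℝ)/Real.exp 1)^m)^2 ≤ ((2*m)! : ℝ) := by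
  have h1 : (1:ℕ) ≤ 2*m := by omega
  rw [fact_eq h1]
  have e1 : Real.sqrt (2*((2*m : ℕ):ℝ)) = 2 * Real.sqrt m := by
    push_cast
    rw [show 2*(2*(m:ℝ)) = 4 * m by ring, Real.sqrt_mul (by norm_num) (m:ℝ),
      show (4:ℝ) = 2^2 by norm_num, Real.sqrt_sq (by norm_num : (0:ℝ) ≤ 2)]
  have e2 : (((2*m : ℕ):ℝ)/Real.exp 1)^(2*m) = 4^m * (((m:ℝ)/Real.exp 1)^m)^2 := by
    push_cast
    rw [show 2*(m:ℝ)/Real.exp 1 = 2 * ((m:ℝ)/Real.exp 1) by ring, mul_pow, pow_mul, pow_mul]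
    norm_num
    ring
  rw [e1, e2]
  have hge := stirling_ge h1
  have hpos : (0:ℝ) < 2 * Real.sqrt m * (4^m * (((m:ℝ)/Real.exp 1)^m)^2) := by
    have hm' : (0:ℝ) < m := by exact_mod_cast hm
    positivity
  nlinarith [hpos, Real.sqrt_nonneg π]

lemma num1 : (1:ℝ) ≤ 8 * (Real.sqrt π * Real.sqrt π) / (Real.exp 1)^3 := by
  rw [Real.mul_self_sqrt Real.pi_pos.le]
  rw [le_div_iff₀ (by positivity)]
  have h1 : (Real.exp 1)^3 < 2.7182818286^3 :=
    pow_lt_pow_left₀ Real.exp_one_lt_d9 (Real.exp_pos 1).le (by norm_num)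
  nlinarith [Real.pi_gt_d6, h1]

lemma num2 : (Real.exp 1)^2 * (Real.exp 1)^2 ≤ 32 * Real.sqrt π := by
  have hs : (1.772:ℝ) ≤ Real.sqrt π := by
    rw [show (1.772:ℝ) = Real.sqrt (1.772^2) by
      rw [Real.sqrt_sq (by norm_num : (0:ℝ) ≤ 1.772)]]
    exact Real.sqrt_le_sqrt (by nlinarith [Real.pi_gt_d6])
  have h1 : (Real.exp 1)^4 < 2.7182818286^4 :=
    pow_lt_pow_left₀ Real.exp_one_lt_d9 (Real.exp_pos 1).le (by norm_num)
  nlinarith [h1, hs]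

lemma cb_bound {m : ℕ} (hm : 1 ≤ m) :
    (1:ℝ) ≤ 2 * Real.sqrt m * (((2*m)! : ℝ) / (4^m * m ! * m !)) := by
  rcases eq_or_lt_of_le hm with h1 | h2
  · simp only [← h1]
    norm_num [Nat.factorial]
  · have hm2 : 2 ≤ m := h2
    set E := Real.exp 1 with hE
    set s := Real.sqrt (m:ℝ) with hs
    set M := ((m:ℝ)/E)^m with hM
    have hmpos : (0:ℝ) < m := by exact_mod_cast hm
    have hspos : 0 < s := Real.sqrt_pos.mpr hmpos
    have hEpos : 0 < E := Real.exp_pos 1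
    have hMpos : 0 < M := by positivity
    have h2' : Real.sqrt 2 * Real.sqrt 2 = 2 := Real.mul_self_sqrt (by norm_num)
    have hden : (4:ℝ)^m * (m !) * (m !)
        ≤ 4^m * ((E^2/4)^2 * 2 * (s*M)^2) := by
      have hf := fact_le2 hm2
      have hR : (0:ℝ) ≤ E^2/4*Real.sqrt 2*s*M := by positivity
      have hmm : (m ! : ℝ) * m ! ≤ (E^2/4*Real.sqrt 2*s*M) * (E^2/4*Real.sqrt 2*s*M) :=
        mul_le_mul hf hf (by positivity) hR
      calc (4:ℝ)^m*m !*m ! = 4^m*((m !:ℝ)*m !) := by ring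
        _ ≤ 4^m*((E^2/4*Real.sqrt 2*s*M)*(E^2/4*Real.sqrt 2*s*M)) := by
            apply mul_le_mul_of_nonneg_left hmm (by positivity)
        _ = 4^m*((E^2/4)^2*(Real.sqrt 2*Real.sqrt 2)*(s*M)^2) := by ring
        _ = 4^m*((E^2/4)^2*2*(s*M)^2) := by rw [h2']
    have hnum := fact2_ge hm
    have hdpos : (0:ℝ) < 4^m * ((E^2/4)^2 * 2 * (s*M)^2) := by positivity
    calc (1:ℝ) ≤ 32 * Real.sqrt π / (E^2*E^2) := by
          rw [le_div_iff₀ (by positivity)]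
          have := num2
          linarith
      _ = 2 * s * ((Real.sqrt π * (2*s) * 4^m * M^2) / (4^m * ((E^2/4)^2 * 2 * (s*M)^2))) := by
          have h4 : (0:ℝ) < 4^m := by positivity
          field_simp
          ring
      _ ≤ 2 * s * (((2*m)! : ℝ) / (4^m * m ! * m !)) := by
          apply mul_le_mul_of_nonneg_left _ (by positivity)
          apply div_le_div₀ (by positivity) hnum (by positivity) hden

lemma stir_main {a b : ℕ} (h : 1 ≤ a + b) :
    (a:ℝ)^a * (b:ℝ)^b / (((a+b : ℕ)):ℝ)^(a+b)
      ≤ 2 * Real.sqrt (((a+b : ℕ)):ℝ) *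
        (((2*a)! : ℝ) * ((2*b)! : ℝ) / (4^(a+b) * (a ! : ℝ) * (b ! : ℝ) * (((a+b)! : ℝ)))) := by
  rcases Nat.eq_zero_or_pos a with ha | ha
  · subst ha
    have hb : 1 ≤ b := by omega
    have hbpos : (0:ℝ) < (b:ℝ)^b := by
      have : (0:ℝ) < (b:ℝ) := by exact_mod_cast hb
      positivity
    simp only [Nat.zero_add, Nat.mul_zero, Nat.factorial_zero, Nat.cast_one, pow_zero, one_mul,
      mul_one]
    have h1 : (b:ℝ)^b / (b:ℝ)^b = 1 := div_self hbpos.ne'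
    rw [h1]
    have := cb_bound hb
    exact this
  · rcases Nat.eq_zero_or_pos b with hb | hb
    · subst hb
      have ha' : 1 ≤ a := ha
      have hapos : (0:ℝ) < (a:ℝ)^a := by
        have : (0:ℝ) < (a:ℝ) := by exact_mod_cast ha'
        positivity
      simp only [Nat.add_zero, Nat.mul_zero, Nat.factorial_zero, Nat.cast_one, pow_zero, mul_one]
      have h1 : (a:ℝ)^a / (a:ℝ)^a = 1 := div_self hapos.ne'
      rw [h1]
      have := cb_bound ha'
      exact this
    · -- main case
      set E := Real.exp 1 with hE
      have hEpos : 0 < E := Real.exp_pos 1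
      have hapos : (0:ℝ) < (a:ℝ) := by exact_mod_cast ha
      have hbpos : (0:ℝ) < (b:ℝ) := by exact_mod_cast hb
      have hnpos : (0:ℝ) < ((a+b : ℕ):ℝ) := by exact_mod_cast h
      set A := ((a:ℝ)/E)^a with hA
      set B := ((b:ℝ)/E)^b with hB
      set N := (((a+b : ℕ):ℝ)/E)^(a+b) with hN
      set ra := Real.sqrt (a:ℝ) with hra
      set rb := Real.sqrt (b:ℝ) with hrb
      set rn := Real.sqrt ((a+b : ℕ):ℝ) with hrn
      have hApos : 0 < A := by positivity
      have hBpos : 0 < B := by positivity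
      have hNpos : 0 < N := by positivity
      have hrapos : 0 < ra := Real.sqrt_pos.mpr hapos
      have hrbpos : 0 < rb := Real.sqrt_pos.mpr hbpos
      have hrnpos : 0 < rn := Real.sqrt_pos.mpr hnpos
      have key1 : (a:ℝ)^a * (b:ℝ)^b / (((a+b : ℕ)):ℝ)^(a+b) = A * B / N := by
        rw [hA, hB, hN, div_pow, div_pow, div_pow, pow_add E]
        have e1 : E^a ≠ 0 := by positivity
        have e2 : E^b ≠ 0 := by positivity
        have e3 : (((a+b:ℕ)):ℝ)^(a+b) ≠ 0 := by positivity
        field_simp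
      rw [key1]
      have step1 : A * B / N ≤ (8 * (Real.sqrt π * Real.sqrt π) / E^3) * (A * B / N) :=
        le_mul_of_one_le_left (by positivity) num1
      have step2 : (8 * (Real.sqrt π * Real.sqrt π) / E^3) * (A * B / N)
          = 2 * rn * ((Real.sqrt π * (2*ra) * 4^a * A^2) * (Real.sqrt π * (2*rb) * 4^b * B^2)
              / (4^(a+b) * (E*ra*A) * (E*rb*B) * (E*rn*N))) := by
        rw [pow_add (4:ℝ)]
        have h4a : (4:ℝ)^a ≠ 0 := by positivity
        have h4b : (4:ℝ)^b ≠ 0 := by positivity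
        field_simp
        ring_nf
      have hnum : (Real.sqrt π * (2*ra) * 4^a * A^2) * (Real.sqrt π * (2*rb) * 4^b * B^2)
          ≤ ((2*a)! : ℝ) * ((2*b)! : ℝ) :=
        mul_le_mul (fact2_ge ha) (fact2_ge hb) (by positivity) (by positivity)
      have hden : (4:ℝ)^(a+b) * (a ! : ℝ) * (b ! : ℝ) * ((a+b)! : ℝ)
          ≤ 4^(a+b) * (E*ra*A) * (E*rb*B) * (E*rn*N) := by
        have f1 := fact_le ha
        have f2 := fact_le hb
        have f3 := fact_le h
        have g1 : (4:ℝ)^(a+b) * (a ! : ℝ) ≤ 4^(a+b) * (E*ra*A) :=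
          mul_le_mul_of_nonneg_left f1 (by positivity)
        have g2 : (4:ℝ)^(a+b) * (a ! : ℝ) * (b ! : ℝ) ≤ 4^(a+b) * (E*ra*A) * (E*rb*B) :=
          mul_le_mul g1 f2 (by positivity) (by positivity)
        exact mul_le_mul g2 f3 (by positivity) (by positivity)
      calc A * B / N ≤ _ := step1
        _ = _ := step2
        _ ≤ 2 * rn * (((2*a)! : ℝ) * ((2*b)! : ℝ)
              / (4^(a+b) * (a ! : ℝ) * (b ! : ℝ) * ((a+b)! : ℝ))) := by
            apply mul_le_mul_of_nonneg_left _ (by positivity)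
            apply div_le_div₀ (by positivity) hnum (by positivity) hden

lemma amgm {a b : ℕ} (h : 1 ≤ a + b) {u : ℝ} (h0 : 0 ≤ u) (h1 : u ≤ 1) :
    u^a * (1-u)^b ≤ (a:ℝ)^a * (b:ℝ)^b / ((a+b:ℕ):ℝ)^(a+b) := by
  rcases Nat.eq_zero_or_pos a with ha | ha
  · subst ha
    have hb : 1 ≤ b := by omega
    have hbp : (0:ℝ) < (b:ℝ)^b := by
      have : (0:ℝ) < (b:ℝ) := by exact_mod_cast hb
      positivity
    simp only [pow_zero, one_mul, Nat.cast_zero, Nat.zero_add]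
    rw [div_self hbp.ne']
    exact pow_le_one₀ (by linarith) (by linarith)
  rcases Nat.eq_zero_or_pos b with hb | hb
  · subst hb
    have ha' : 1 ≤ a := by omega
    have hap : (0:ℝ) < (a:ℝ)^a := by
      have : (0:ℝ) < (a:ℝ) := by exact_mod_cast ha'
      positivity
    simp only [pow_zero, mul_one, Nat.cast_zero, Nat.add_zero]
    rw [div_self hap.ne']
    exact pow_le_one₀ h0 h1
  -- main case
  have har : (0:ℝ) < a := by exact_mod_cast ha
  have hbr : (0:ℝ) < b := by exact_mod_cast hb
  have hnr : (0:ℝ) < ((a+b:ℕ):ℝ) := by exact_mod_cast h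
  have hrhs : (0:ℝ) < (a:ℝ)^a * (b:ℝ)^b / ((a+b:ℕ):ℝ)^(a+b) := by positivity
  rcases eq_or_lt_of_le h0 with h0' | h0'
  · rw [← h0', zero_pow ha.ne']
    simpa using hrhs.le
  rcases eq_or_lt_of_le h1 with h1' | h1'
  · rw [h1']
    simp only [sub_self, zero_pow hb.ne', mul_zero]
    exact hrhs.le
  set nr := ((a+b:ℕ):ℝ) with hnrdef
  set p1 := u * nr / a with hp1
  set p2 := (1-u) * nr / b with hp2
  have hu1 : (0:ℝ) < 1 - u := by linarith
  have hp1p : 0 < p1 := by positivity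
  have hp2p : 0 < p2 := by positivity
  have hw : (a:ℝ)/nr + (b:ℝ)/nr = 1 := by
    rw [← add_div, hnrdef]
    push_cast
    field_simp
  have hg := Real.geom_mean_le_arith_mean2_weighted
    (by positivity : (0:ℝ) ≤ (a:ℝ)/nr) (by positivity : (0:ℝ) ≤ (b:ℝ)/nr)
    hp1p.le hp2p.le hw
  have harith : (a:ℝ)/nr * p1 + (b:ℝ)/nr * p2 = 1 := by
    rw [hp1, hp2]
    field_simp
    ring
  rw [harith] at hg
  have hpow := pow_le_pow_left₀ (by positivity) hg (a+b)
  rw [one_pow, mul_pow] at hpow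
  have e1 : (p1 ^ ((a:ℝ)/nr)) ^ (a+b) = p1 ^ a := by
    rw [← Real.rpow_natCast (p1 ^ ((a:ℝ)/nr)) (a+b), ← Real.rpow_mul hp1p.le,
      div_mul_cancel₀ _ hnr.ne', Real.rpow_natCast]
  have e2 : (p2 ^ ((b:ℝ)/nr)) ^ (a+b) = p2 ^ b := by
    rw [← Real.rpow_natCast (p2 ^ ((b:ℝ)/nr)) (a+b), ← Real.rpow_mul hp2p.le,
      div_mul_cancel₀ _ hnr.ne', Real.rpow_natCast]
  rw [e1, e2] at hpow
  have eu : u = p1 * ((a:ℝ)/nr) := by rw [hp1]; field_simp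
  have ev : 1 - u = p2 * ((b:ℝ)/nr) := by rw [hp2]; field_simp
  calc u^a * (1-u)^b = (p1^a * p2^b) * (((a:ℝ)/nr)^a * ((b:ℝ)/nr)^b) := by
        rw [ev, eu, mul_pow, mul_pow]; ring
    _ ≤ 1 * (((a:ℝ)/nr)^a * ((b:ℝ)/nr)^b) := by
        apply mul_le_mul_of_nonneg_right hpow (by positivity)
    _ = (a:ℝ)^a * (b:ℝ)^b / nr^(a+b) := by
        rw [one_mul, div_pow, div_pow, pow_add]
        field_simp

lemma ones_le {n : ℕ} (x : Fin n → Bool) : ones x ≤ n := by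
  simpa [ones] using Finset.card_filter_le Finset.univ (fun k => x k = true)

lemma sum_pow (n : ℕ) (u : ℝ) :
    ∑ x : Fin n → Bool, u^(ones x) * (1-u)^(n - ones x) = 1 := by
  have key : ∀ x : Fin n → Bool,
      u^(ones x) * (1-u)^(n - ones x) = ∏ k : Fin n, (if x k = true then u else 1-u) := by
    intro x
    rw [Finset.prod_ite, Finset.prod_const, Finset.prod_const]
    have hc := Finset.card_filter_add_card_filter_not
      (s := Finset.univ) (p := fun k : Fin n => x k = true)
    simp only [Finset.card_univ, Fintype.card_fin] at hc
    have : (Finset.univ.filter (fun k : Fin n => ¬ x k = true)).card = n - ones x := by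
      unfold ones; omega
    rw [this]
    rfl
  rw [Finset.sum_congr rfl (fun x _ => key x)]
  have hps := Finset.prod_univ_sum (t := fun _ : Fin n => (Finset.univ : Finset Bool))
    (f := fun _ b => if b = true then u else 1-u)
  rw [Fintype.piFinset_univ] at hps
  rw [← hps]
  simp

/-- (i) `kt` is a probability distribution on `{0,1}^n`, and
(ii) it uniformly dominates every Bernoulli likelihood up to a factor `2√n`. -/
theorem krichevsky_trofimov (n : ℕ) (hn : 1 ≤ n) :
    (∑ x : Fin n → Bool, kt x = 1) ∧
    ∀ x : Fin n → Bool, ∀ u ∈ Set.Icc (0 : ℝ) 1,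
      u ^ ones x * (1 - u) ^ (n - ones x) ≤ 2 * Real.sqrt n * kt x := by
  constructor
  · have hunfold : ∀ x : Fin n → Bool, kt x
        = ∫ u in (0:ℝ)..1,
            u ^ ones x * (1 - u) ^ (n - ones x) / (π * Real.sqrt (u * (1 - u))) :=
      fun x => rfl
    calc ∑ x : Fin n → Bool, kt x
        = ∫ u in (0:ℝ)..1, ∑ x : Fin n → Bool,
            u ^ ones x * (1 - u) ^ (n - ones x) / (π * Real.sqrt (u * (1 - u))) := by
          rw [intervalIntegral.integral_finset_sum]
          · exact Finset.sum_congr rfl fun x _ => hunfold x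
          · exact fun x _ => kt_int (ones x) (n - ones x)
      _ = ∫ u in (0:ℝ)..1, u^(0:ℕ)*(1-u)^(0:ℕ)/(π*Real.sqrt (u*(1-u))) := by
          refine intervalIntegral.integral_congr fun u _ => ?_
          rw [← Finset.sum_div, sum_pow]
          norm_num
      _ = 1 := by rw [ktab 0 0]; norm_num
  · intro x u hu
    set a := ones x with hadef
    have hale : a ≤ n := ones_le x
    have hab : a + (n - a) = n := by omega
    have h1n : 1 ≤ a + (n - a) := by omega
    have hkt : kt x = ((2*a)! * (2*(n-a))! : ℝ)
        / (4^(a+(n-a)) * a ! * (n-a)! * ((a+(n-a))!)) := ktab a (n-a)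
    calc u ^ a * (1 - u) ^ (n - a)
        ≤ (a:ℝ)^a * ((n-a : ℕ):ℝ)^(n-a) / ((a+(n-a):ℕ):ℝ)^(a+(n-a)) :=
          amgm h1n hu.1 hu.2
      _ ≤ 2 * Real.sqrt (((a+(n-a) : ℕ)):ℝ) *
          (((2*a)! : ℝ) * ((2*(n-a))! : ℝ)
            / (4^(a+(n-a)) * (a ! : ℝ) * ((n-a)! : ℝ) * (((a+(n-a))! : ℝ)))) :=
          stir_main h1n
      _ = 2 * Real.sqrt n * kt x := by
          rw [hkt, hab]
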